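/- arXiv:1706.10107 — 3 statements merged into one kernel-verified Lean document; each statement's English description precedes it below -/
import Mathlib

section
/- Let X and Y be Banach spaces and let F : X → Y be Fréchet differentiable. Fix ā ∈ X, let A† : X → Y and A : Y → X be bounded linear operators with A injective, and let r > 0 and Y₀, Z₀, Z₁, Z₂ ≥ 0 be constants satisfying: (i) ‖A F(ā)‖_X ≤ Y₀; (ii) ‖Id_X − A∘A†‖ ≤ Z₀; (iii) ‖A∘(A† − DF(ā))‖ ≤ Z₁; (iv) ‖A∘(DF(x) − DF(ā))‖ ≤ Z₂ ‖x − ā‖_X for all x in the closed ball of radius r centered at ā; and (v) Y₀ + (Z₀ + Z₁) r + Z₂ r² < r. Then there exists a unique ã in the open ball of radius r centered at ā such that F(ã) = 0. -/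
/-- Newton–Kantorovich-type a-posteriori theorem (radii polynomial approach).
Under the bounds `Y₀, Z₀, Z₁, Z₂` and the radii-polynomial condition
`Y₀ + (Z₀ + Z₁) r + Z₂ r² < r`, there is a unique zero of `F` in the open ball
of radius `r` about `ā`. -/
theorem exists_unique_zero_of_radii_polynomial
    {X Y : Type*} [NormedAddCommGroup X] [NormedSpace ℝ X] [CompleteSpace X]
    [NormedAddCommGroup Y] [NormedSpace ℝ Y] [CompleteSpace Y]
    (F : X → Y) (DF : X → X →L[ℝ] Y) (hF : ∀ x, HasFDerivAt F (DF x) x)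
    (abar : X) (Adag : X →L[ℝ] Y) (A : Y →L[ℝ] X)
    (hA : Function.Injective A)
    (r Y₀ Z₀ Z₁ Z₂ : ℝ) (hr : 0 < r)
    (hY₀ : 0 ≤ Y₀) (hZ₀ : 0 ≤ Z₀) (hZ₁ : 0 ≤ Z₁) (hZ₂ : 0 ≤ Z₂)
    (hY : ‖A (F abar)‖ ≤ Y₀)
    (hZ0 : ‖ContinuousLinearMap.id ℝ X - A.comp Adag‖ ≤ Z₀)
    (hZ1 : ‖A.comp (Adag - DF abar)‖ ≤ Z₁)
    (hZ2 : ∀ x ∈ Metric.closedBall abar r, ‖A.comp (DF x - DF abar)‖ ≤ Z₂ * ‖x - abar‖)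
    (hp : Y₀ + (Z₀ + Z₁) * r + Z₂ * r ^ 2 < r) :
    ∃! atilde : X, atilde ∈ Metric.ball abar r ∧ F atilde = 0 := by
  classical
  set s : Set X := Metric.closedBall abar r with hs
  set T : X → X := fun x => x - A (F x) with hT
  set DT : X → X →L[ℝ] X := fun x => ContinuousLinearMap.id ℝ X - A.comp (DF x) with hDT
  set κ : ℝ := Z₀ + Z₁ + Z₂ * r with hκ
  have hκ0 : 0 ≤ κ := by positivity
  have hκr : Y₀ + κ * r < r := by nlinarith
  have hκ1 : κ < 1 := by nlinarith
  have hTd : ∀ x, HasFDerivAt T (DT x) x := fun x =>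
    (hasFDerivAt_id x).sub (A.hasFDerivAt.comp x (hF x))
  have hDTbound : ∀ x ∈ s, ‖DT x‖ ≤ κ := by
    intro x hx
    have hdecomp : DT x = (ContinuousLinearMap.id ℝ X - A.comp Adag)
        + A.comp (Adag - DF abar) - A.comp (DF x - DF abar) := by
      ext v
      simp [hDT, map_sub]
    rw [hdecomp]
    calc ‖(ContinuousLinearMap.id ℝ X - A.comp Adag)
        + A.comp (Adag - DF abar) - A.comp (DF x - DF abar)‖
        ≤ ‖(ContinuousLinearMap.id ℝ X - A.comp Adag) + A.comp (Adag - DF abar)‖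
          + ‖A.comp (DF x - DF abar)‖ := norm_sub_le _ _
      _ ≤ ‖ContinuousLinearMap.id ℝ X - A.comp Adag‖ + ‖A.comp (Adag - DF abar)‖
          + ‖A.comp (DF x - DF abar)‖ := by
            gcongr
            exact norm_add_le _ _
      _ ≤ Z₀ + Z₁ + Z₂ * ‖x - abar‖ := by gcongr; exact hZ2 x hx
      _ ≤ κ := by
          rw [hκ]
          gcongr
          simpa [dist_eq_norm] using Metric.mem_closedBall.mp hx
  set K : NNReal := ⟨κ, hκ0⟩ with hK
  have hconv : Convex ℝ s := convex_closedBall abar r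
  have hlip : LipschitzOnWith K T s := by
    apply hconv.lipschitzOnWith_of_nnnorm_hasFDerivWithin_le
      (f' := DT) (fun x hx => (hTd x).hasFDerivWithinAt)
    intro x hx
    exact (hDTbound x hx)
  have hlipnorm : ∀ x ∈ s, ∀ y ∈ s, ‖T x - T y‖ ≤ κ * ‖x - y‖ := by
    intro x hx y hy
    have h2 := hlip.dist_le_mul x hx y hy
    rw [dist_eq_norm, dist_eq_norm] at h2
    exact h2
  -- T maps the closed ball into the open ball
  have hTabar : ‖T abar - abar‖ ≤ Y₀ := by
    simp only [hT]
    simpa using hY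
  have hmaps' : ∀ x ∈ s, T x ∈ Metric.ball abar r := by
    intro x hx
    have h1 : ‖T x - abar‖ ≤ κ * ‖x - abar‖ + Y₀ := by
      calc ‖T x - abar‖ ≤ ‖T x - T abar‖ + ‖T abar - abar‖ := by
            simpa using norm_sub_le_norm_sub_add_norm_sub (T x) (T abar) abar
        _ ≤ κ * ‖x - abar‖ + Y₀ := by
            gcongr
            exact hlipnorm x hx abar (Metric.mem_closedBall_self hr.le)
    have hxr : ‖x - abar‖ ≤ r := by simpa [dist_eq_norm] using Metric.mem_closedBall.mp hx
    have : ‖T x - abar‖ < r := by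
      calc ‖T x - abar‖ ≤ κ * ‖x - abar‖ + Y₀ := h1
        _ ≤ κ * r + Y₀ := by gcongr
        _ < r := by linarith
    simpa [Metric.mem_ball, dist_eq_norm] using this
  have hmaps : Set.MapsTo T s s := fun x hx => Metric.ball_subset_closedBall (hmaps' x hx)
  have hcontr : ContractingWith K (hmaps.restrict T s s) :=
    ⟨by rw [← NNReal.coe_lt_coe]; exact hκ1, hlip.mapsToRestrict hmaps⟩
  have hcomplete : IsComplete s := (Metric.isClosed_closedBall).isComplete
  obtain ⟨y, hys, hyfix, -, -⟩ :=
    hcontr.exists_fixedPoint' hcomplete hmaps (Metric.mem_closedBall_self hr.le)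
      (edist_ne_top _ _)
  -- fixed points correspond to zeros
  have fix_iff : ∀ x, T x = x ↔ F x = 0 := by
    intro x
    constructor
    · intro h
      have h' : x - A (F x) = x := h
      have hz : A (F x) = 0 := sub_eq_self.mp h'
      exact hA (by simpa using hz)
    · intro h; simp [hT, h]
  have hFy : F y = 0 := (fix_iff y).mp hyfix
  have hyball : y ∈ Metric.ball abar r := by
    have := hmaps' y hys
    rwa [hyfix] at this
  refine ⟨y, ⟨hyball, hFy⟩, ?_⟩
  rintro z ⟨hzball, hzF⟩
  have hzs : z ∈ s := Metric.ball_subset_closedBall hzball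
  have hzfix : T z = z := (fix_iff z).mpr hzF
  have hz' : Function.IsFixedPt (hmaps.restrict T s s) ⟨z, hzs⟩ := Subtype.ext hzfix
  have hy' : Function.IsFixedPt (hmaps.restrict T s s) ⟨y, hys⟩ := Subtype.ext hyfix
  have := hcontr.fixedPoint_unique' hz' hy'
  exact congrArg Subtype.val this
end

section
/- Let X and Y be Banach spaces, F : X → Y Fréchet differentiable, ā ∈ X, A† : X → Y and A : Y → X bounded linear operators, and r > 0 and Y₀, Z₀, Z₁, Z₂ ≥ 0 constants satisfying ‖A F(ā)‖_X ≤ Y₀, ‖Id_X − A∘A†‖ ≤ Z₀, ‖A∘(A† − DF(ā))‖ ≤ Z₁, ‖A∘(DF(x) − DF(ā))‖ ≤ Z₂‖x − ā‖_X for all x in the closed ball of radius r centered at ā, and Y₀ + (Z₀ + Z₁) r + Z₂ r² < r. Then the map T(x) = x − A(F(x)) sends the closed ball of radius r centered at ā into the open ball of radius r centered at ā; more precisely, ‖T(x) − ā‖_X ≤ Y₀ + (Z₀ + Z₁) r + Z₂ r² < r for every x with ‖x − ā‖_X ≤ r. -/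
/-- Under the `Y₀, Z₀, Z₁, Z₂` bounds and the radii-polynomial condition,
the Newton-like map `T(x) = x − A(F(x))` sends the closed ball of radius `r` about `ā`
into the open ball of radius `r` about `ā`; more precisely,
`‖T(x) − ā‖ ≤ Y₀ + (Z₀ + Z₁) r + Z₂ r² < r` on the closed ball. -/
theorem newton_map_maps_closedBall_into_ball
    {X Y : Type*} [NormedAddCommGroup X] [NormedSpace ℝ X] [CompleteSpace X]
    [NormedAddCommGroup Y] [NormedSpace ℝ Y] [CompleteSpace Y]
    (F : X → Y) (DF : X → X →L[ℝ] Y) (hF : ∀ x, HasFDerivAt F (DF x) x)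
    (abar : X) (Adag : X →L[ℝ] Y) (A : Y →L[ℝ] X)
    (r Y₀ Z₀ Z₁ Z₂ : ℝ) (hr : 0 < r)
    (hY₀ : 0 ≤ Y₀) (hZ₀ : 0 ≤ Z₀) (hZ₁ : 0 ≤ Z₁) (hZ₂ : 0 ≤ Z₂)
    (hY : ‖A (F abar)‖ ≤ Y₀)
    (hZ0 : ‖ContinuousLinearMap.id ℝ X - A.comp Adag‖ ≤ Z₀)
    (hZ1 : ‖A.comp (Adag - DF abar)‖ ≤ Z₁)
    (hZ2 : ∀ x ∈ Metric.closedBall abar r, ‖A.comp (DF x - DF abar)‖ ≤ Z₂ * ‖x - abar‖)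
    (hp : Y₀ + (Z₀ + Z₁) * r + Z₂ * r ^ 2 < r) :
    ∀ x ∈ Metric.closedBall abar r,
      ‖(x - A (F x)) - abar‖ ≤ Y₀ + (Z₀ + Z₁) * r + Z₂ * r ^ 2 ∧
        (x - A (F x)) ∈ Metric.ball abar r := by
  intro x hx
  set g : X → X := fun z => z - A (F z) with hg
  set g' : X → X →L[ℝ] X := fun z => ContinuousLinearMap.id ℝ X - A.comp (DF z) with hg'
  have hderiv : ∀ z ∈ Metric.closedBall abar r,
      HasFDerivWithinAt g (g' z) (Metric.closedBall abar r) z := by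
    intro z _
    exact ((hasFDerivAt_id z).sub ((A.hasFDerivAt.comp z (hF z)))).hasFDerivWithinAt
  have hbound : ∀ z ∈ Metric.closedBall abar r, ‖g' z‖ ≤ Z₀ + Z₁ + Z₂ * r := by
    intro z hz
    have hzr : ‖z - abar‖ ≤ r := by
      simpa [dist_eq_norm] using Metric.mem_closedBall.mp hz
    have hdecomp : g' z = (ContinuousLinearMap.id ℝ X - A.comp Adag)
        + A.comp (Adag - DF abar) - A.comp (DF z - DF abar) := by
      ext v
      simp [hg', ContinuousLinearMap.comp_apply, map_sub]
    calc ‖g' z‖ ≤ ‖ContinuousLinearMap.id ℝ X - A.comp Adag‖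
          + ‖A.comp (Adag - DF abar)‖ + ‖A.comp (DF z - DF abar)‖ := by
          rw [hdecomp]
          exact (norm_sub_le _ _).trans (by gcongr; exact norm_add_le _ _)
      _ ≤ Z₀ + Z₁ + Z₂ * ‖z - abar‖ := by
          gcongr
          exact hZ2 z hz
      _ ≤ Z₀ + Z₁ + Z₂ * r := by gcongr
  have hmvt := (convex_closedBall abar r).norm_image_sub_le_of_norm_hasFDerivWithin_le
      hderiv hbound (Metric.mem_closedBall_self hr.le) hx
  have hxr : ‖x - abar‖ ≤ r := by simpa [dist_eq_norm] using Metric.mem_closedBall.mp hx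
  have hkey : ‖(x - A (F x)) - abar‖ ≤ Y₀ + (Z₀ + Z₁) * r + Z₂ * r ^ 2 := by
    have heq : (x - A (F x)) - abar = (g x - g abar) - A (F abar) := by
      simp [hg]; abel
    calc ‖(x - A (F x)) - abar‖ ≤ ‖g x - g abar‖ + ‖A (F abar)‖ := by
          rw [heq]; exact norm_sub_le _ _
      _ ≤ (Z₀ + Z₁ + Z₂ * r) * ‖x - abar‖ + Y₀ := by
          gcongr
      _ ≤ (Z₀ + Z₁ + Z₂ * r) * r + Y₀ := by
          have h0 : 0 ≤ Z₀ + Z₁ + Z₂ * r := by positivity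
          gcongr
      _ = Y₀ + (Z₀ + Z₁) * r + Z₂ * r ^ 2 := by ring
  exact ⟨hkey, Metric.mem_ball.mpr (by rw [dist_eq_norm]; exact hkey.trans_lt hp)⟩
end

section
/- Let f : ℝⁿ → ℝⁿ be continuously differentiable, U ⊆ ℝⁿ open, and Φ : U × [0,∞) → ℝⁿ a map such that for every x ∈ U, Φ(x,0) = x and the curve t ↦ Φ(x,t) is differentiable with ∂Φ/∂t(x,t) = f(Φ(x,t)) for all t ≥ 0. Let 1 ≤ d ≤ n, let λ₁, …, λ_d < 0 be real numbers, let B denote the open unit ball in ℝ^d, and define L : ℝ^d × ℝ → ℝ^d by L(s,t) = (e^{λ₁ t} s₁, …, e^{λ_d t} s_d). Suppose P : B → ℝⁿ is continuously differentiable with P(B) ⊆ U and P satisfies the invariance equation f(P(s)) = Σ_{j=1}^d λ_j s_j ∂P/∂s_j(s) for all s ∈ B. Then Φ(P(s), t) = P(L(s,t)) for all s ∈ B and all t ≥ 0. -/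
/-- Parameterization Lemma, one direction: if `P` solves the invariance
equation `f(P(s)) = Σ_j λ_j s_j ∂P/∂s_j(s)` on the open unit ball `B ⊂ ℝ^d`, subject to
the stated regularity hypotheses, then `P` satisfies the flow conjugacy
`Φ(P(s), t) = P(L(s,t))` for all `s ∈ B` and `t ≥ 0`, where
`L(s,t) = (e^{λ₁ t} s₁, …, e^{λ_d t} s_d)`. -/
theorem invariance_implies_flow_conjugacy
    {n d : ℕ} (hd : 1 ≤ d) (hdn : d ≤ n)
    (f : (Fin n → ℝ) → Fin n → ℝ) (hf : ContDiff ℝ 1 f)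
    (U : Set (Fin n → ℝ)) (hU : IsOpen U)
    (Φ : (Fin n → ℝ) → ℝ → Fin n → ℝ)
    (hΦ0 : ∀ x ∈ U, Φ x 0 = x)
    (hΦ : ∀ x ∈ U, ∀ t : ℝ, 0 ≤ t → HasDerivAt (Φ x) (f (Φ x t)) t)
    (lam : Fin d → ℝ) (hlam : ∀ j, lam j < 0)
    (P : (Fin d → ℝ) → Fin n → ℝ)
    (hP : ContDiffOn ℝ 1 P (Metric.ball (0 : Fin d → ℝ) 1))
    (hPU : ∀ s ∈ Metric.ball (0 : Fin d → ℝ) 1, P s ∈ U)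
    (hinv : ∀ s ∈ Metric.ball (0 : Fin d → ℝ) 1,
      f (P s) = fderiv ℝ P s (fun j => lam j * s j)) :
    ∀ s ∈ Metric.ball (0 : Fin d → ℝ) 1, ∀ t : ℝ, 0 ≤ t →
      Φ (P s) t = P (fun j => Real.exp (lam j * t) * s j) := by
  intro s hs T hT
  set B : Set (Fin d → ℝ) := Metric.ball (0 : Fin d → ℝ) 1 with hB
  set L : ℝ → Fin d → ℝ := fun t j => Real.exp (lam j * t) * s j with hLdef
  have hsnorm : ‖s‖ < 1 := by
    rw [hB, Metric.mem_ball, dist_zero_right] at hs; exact hs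
  -- L t stays in the ball for t ≥ 0
  have hLmem : ∀ t : ℝ, 0 ≤ t → L t ∈ B := by
    intro t ht
    rw [hB, Metric.mem_ball, dist_zero_right]
    refine lt_of_le_of_lt ((pi_norm_le_iff_of_nonneg (norm_nonneg s)).2 fun j => ?_) hsnorm
    have h1 : Real.exp (lam j * t) ≤ 1 :=
      Real.exp_le_one_iff.2 (mul_nonpos_of_nonpos_of_nonneg (hlam j).le ht)
    calc ‖L t j‖ = Real.exp (lam j * t) * ‖s j‖ := by
          rw [hLdef]; simp [abs_mul, abs_of_pos (Real.exp_pos _), Real.norm_eq_abs]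
      _ ≤ 1 * ‖s j‖ := by
          exact mul_le_mul_of_nonneg_right h1 (norm_nonneg _)
      _ = ‖s j‖ := one_mul _
      _ ≤ ‖s‖ := norm_le_pi_norm s j
  -- derivative of L
  have hLder : ∀ t : ℝ, HasDerivAt L (fun j => lam j * L t j) t := by
    intro t
    refine hasDerivAt_pi.2 fun j => ?_
    have hinner : HasDerivAt (fun u : ℝ => lam j * u) (lam j) t := by
      simpa using (hasDerivAt_id t).const_mul (lam j)
    have h1 : HasDerivAt (fun u : ℝ => Real.exp (lam j * u))
        (lam j * Real.exp (lam j * t)) t := by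
      simpa [mul_comm] using hinner.exp
    have := h1.mul_const (s j)
    simpa [hLdef, mul_assoc] using this
  -- P has a (total) derivative on the open ball
  have hPd : ∀ y ∈ B, HasFDerivAt P (fderiv ℝ P y) y := fun y hy =>
    ((hP.contDiffAt (Metric.isOpen_ball.mem_nhds hy)).differentiableAt one_ne_zero).hasFDerivAt
  -- g := P ∘ L solves the ODE
  set g : ℝ → Fin n → ℝ := fun t => P (L t) with hgdef
  have hgder : ∀ t : ℝ, 0 ≤ t → HasDerivAt g (f (g t)) t := by
    intro t ht
    have h1 := (hPd _ (hLmem t ht)).comp_hasDerivAt t (hLder t)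
    have h2 : f (g t) = fderiv ℝ P (L t) (fun j => lam j * L t j) :=
      hinv (L t) (hLmem t ht)
    rw [h2]
    exact h1
  set F : ℝ → Fin n → ℝ := fun t => Φ (P s) t with hFdef
  have hPsU : P s ∈ U := hPU s hs
  have hFder : ∀ t : ℝ, 0 ≤ t → HasDerivAt F (f (F t)) t := fun t ht =>
    hΦ (P s) hPsU t ht
  -- continuity on [0,T]
  have hFc : ContinuousOn F (Set.Icc 0 T) := fun t ht =>
    ((hFder t ht.1).continuousAt).continuousWithinAt
  have hgc : ContinuousOn g (Set.Icc 0 T) := fun t ht =>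
    ((hgder t ht.1).continuousAt).continuousWithinAt
  -- both trajectories live in a big closed ball
  have hKF : IsCompact (F '' Set.Icc 0 T) := (isCompact_Icc).image_of_continuousOn hFc
  have hKg : IsCompact (g '' Set.Icc 0 T) := (isCompact_Icc).image_of_continuousOn hgc
  obtain ⟨R, hR⟩ := (hKF.union hKg).isBounded.subset_closedBall 0
  have hF0 : F 0 ∈ Metric.closedBall (0 : Fin n → ℝ) R :=
    hR (Set.mem_union_left _ ⟨0, Set.mem_Icc.2 ⟨le_refl 0, hT⟩, rfl⟩)
  -- f is Lipschitz on the closed ball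
  have hcont : ContinuousOn (fun x => ‖fderiv ℝ f x‖) (Metric.closedBall (0 : Fin n → ℝ) R) :=
    ((hf.continuous_fderiv one_ne_zero).norm).continuousOn
  obtain ⟨x₀, hx₀K, hx₀'⟩ := (isCompact_closedBall (0 : Fin n → ℝ) R).exists_isMaxOn
    ⟨F 0, hF0⟩ hcont
  have hlip : LipschitzOnWith ‖fderiv ℝ f x₀‖₊ f (Metric.closedBall (0 : Fin n → ℝ) R) := by
    refine Convex.lipschitzOnWith_of_nnnorm_hasFDerivWithin_le
      (f' := fun x => fderiv ℝ f x)
      (fun x _ => ((hf.differentiable one_ne_zero) x).hasFDerivAt.hasFDerivWithinAt)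
      (fun x hx => ?_) (convex_closedBall 0 R)
    exact_mod_cast hx₀' hx
  -- uniqueness of ODE solutions
  have key : Set.EqOn F g (Set.Icc 0 T) := by
    refine ODE_solution_unique_of_mem_Icc_right
      (v := fun _ => f) (s := fun _ => Metric.closedBall (0 : Fin n → ℝ) R)
      (fun _ _ => hlip) hFc
      (fun t ht => ((hFder t ht.1).hasDerivWithinAt))
      (fun t ht => hR (Set.mem_union_left _ ⟨t, Set.Ico_subset_Icc_self ht, rfl⟩))
      hgc
      (fun t ht => ((hgder t ht.1).hasDerivWithinAt))
      (fun t ht => hR (Set.mem_union_right _ ⟨t, Set.Ico_subset_Icc_self ht, rfl⟩))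
      ?_
    -- initial condition
    have hL0 : L 0 = s := by
      funext j; simp [hLdef]
    rw [hFdef, hgdef]
    simp only [hL0]
    exact hΦ0 (P s) hPsU
  have := key (Set.mem_Icc.2 ⟨hT, le_refl T⟩)
  simpa [hFdef, hgdef, hLdef] using this
end
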